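/- There exists a B-partition of the unit interval with Lebesgue measure that does not have the re-randomizing property. Concretely, the partition of [0,1) into the pairs {x, 2x+1/3} for 0 ≤ x < 1/3 is a B-partition, but re-randomizing a uniform random point along it yields a point landing in [0,1/3) with probability 1/2 rather than 1/3. -/

import Mathlib

open MeasureTheory

/-- The class of the partition (setoid) `s` containing `x`. -/
def Setoid.cls {J : Type*} (s : Setoid J) (x : J) : Set J := {y | s.r x y}

/-- The saturation of a set `A`: the union of all classes of `s` meeting `A`. -/
def Setoid.sat {J : Type*} (s : Setoid J) (A : Set J) : Set J := {x | ∃ y ∈ A, s.r x y}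

/-- A partition is a `B`-partition if the saturation of every Borel (measurable) set
is Borel (measurable). -/
def IsBPartition {J : Type*} [MeasurableSpace J] (s : Setoid J) : Prop :=
  ∀ A : Set J, MeasurableSet A → MeasurableSet (s.sat A)

open scoped Classical

/-- The probability that, picking a `π`-random point and re-randomizing it along `s`
(i.e. replacing it by a uniform random point of its class when that class is finite,
keeping it otherwise), the resulting point lies in `A`. -/
noncomputable def rerandProb {J : Type*} [MeasurableSpace J] (s : Setoid J)
    (π : MeasureTheory.Measure J) (A : Set J) : ℝ :=
  ∫ x, (if (s.cls x).Finite then (Nat.card ↥(s.cls x ∩ A) : ℝ) / (Nat.card ↥(s.cls x))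
        else A.indicator 1 x) ∂π

/-- A partition `s` has the re-randomizing property with respect to `π` if re-randomizing
a `π`-random point along `s` again yields a point distributed according to `π`. -/
def HasRerand {J : Type*} [MeasurableSpace J] (s : Setoid J)
    (π : MeasureTheory.Measure J) : Prop :=
  ∀ A : Set J, MeasurableSet A → rerandProb s π A = (π A).toReal

/-- The pairing map of Example: `x ↦ 2x + 1/3` on `[0,1/3)`, its inverse on `[1/3,1)`,
identity elsewhere. Its orbits are the pairs `{x, 2x+1/3}`, `0 ≤ x < 1/3`. -/
noncomputable def pairMap (x : ℝ) : ℝ :=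
  if x ∈ Set.Ico (0 : ℝ) (1/3) then 2*x + 1/3
  else if x ∈ Set.Ico (1/3 : ℝ) 1 then (x - 1/3)/2
  else x

lemma pairMap_lo {x : ℝ} (h : x ∈ Set.Ico (0:ℝ) (1/3)) : pairMap x = 2*x + 1/3 := if_pos h

lemma pairMap_hi {x : ℝ} (h : x ∈ Set.Ico (1/3:ℝ) 1) : pairMap x = (x - 1/3)/2 := by
  have h1 : x ∉ Set.Ico (0:ℝ) (1/3) := by simp only [Set.mem_Ico] at *; intro hc; linarith [h.1]
  rw [pairMap, if_neg h1, if_pos h]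

lemma pairMap_out {x : ℝ} (h : x ∉ Set.Ico (0:ℝ) 1) : pairMap x = x := by
  simp only [Set.mem_Ico, not_and_or, not_le, not_lt] at h
  rw [pairMap, if_neg, if_neg] <;> simp only [Set.mem_Ico, not_and_or, not_le, not_lt] <;>
    rcases h with h | h
  · left; linarith
  · right; exact h
  · left; linarith
  · right; linarith

lemma pairMap_invol (x : ℝ) : pairMap (pairMap x) = x := by
  by_cases h1 : x ∈ Set.Ico (0:ℝ) (1/3)
  · rw [pairMap_lo h1]
    obtain ⟨a, b⟩ := h1
    rw [pairMap_hi (by constructor <;> [linarith; linarith])]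
    ring
  · by_cases h2 : x ∈ Set.Ico (1/3:ℝ) 1
    · rw [pairMap_hi h2]
      obtain ⟨a, b⟩ := h2
      rw [pairMap_lo (by constructor <;> [linarith; linarith])]
      ring
    · have h3 : x ∉ Set.Ico (0:ℝ) 1 := by
        simp only [Set.mem_Ico, not_and_or, not_le, not_lt] at *
        rcases h1 with h | h
        · left; exact h
        · rcases h2 with h' | h'
          · exfalso; linarith
          · right; exact h'
      rw [pairMap_out h3, pairMap_out h3]

lemma measurable_pairMap : Measurable pairMap := by
  unfold pairMap
  refine Measurable.ite measurableSet_Ico (by fun_prop) ?_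
  exact Measurable.ite measurableSet_Ico (by fun_prop) (by fun_prop)

lemma pairMap_ne {x : ℝ} (h : x ∈ Set.Ico (0:ℝ) 1) : pairMap x ≠ x := by
  obtain ⟨a, b⟩ := h
  by_cases h1 : x ∈ Set.Ico (0:ℝ) (1/3)
  · rw [pairMap_lo h1]; obtain ⟨c, d⟩ := h1; intro hc; linarith
  · have h2 : x ∈ Set.Ico (1/3:ℝ) 1 := by
      simp only [Set.mem_Ico, not_and_or, not_le, not_lt] at h1 ⊢
      rcases h1 with h | h
      · exfalso; linarith
      · exact ⟨by linarith, b⟩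
    rw [pairMap_hi h2]; obtain ⟨c, d⟩ := h2; intro hc; linarith

def pairSetoid : Setoid ℝ :=
  ⟨fun x y => y = x ∨ y = pairMap x, by
    constructor
    · intro x; left; rfl
    · rintro x y (rfl | rfl)
      · left; rfl
      · right; rw [pairMap_invol]
    · rintro x y z (rfl | rfl) (rfl | rfl) <;> simp [pairMap_invol]⟩

lemma pairSetoid_r (x y : ℝ) : pairSetoid.r x y ↔ (y = x ∨ y = pairMap x) := Iff.rfl

lemma pairSetoid_cls (x : ℝ) : pairSetoid.cls x = {x, pairMap x} := by
  ext y; simp [Setoid.cls, pairSetoid_r, Set.mem_insert_iff]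

lemma pairSetoid_sat (A : Set ℝ) : pairSetoid.sat A = A ∪ pairMap ⁻¹' A := by
  ext x
  simp only [Setoid.sat, Set.mem_setOf_eq, Set.mem_union, Set.mem_preimage]
  constructor
  · rintro ⟨y, hy, rfl | rfl⟩
    · left; exact hy
    · right; exact hy
  · rintro (h | h)
    · exact ⟨x, h, Or.inl rfl⟩
    · exact ⟨pairMap x, h, Or.inr rfl⟩

lemma pairSetoid_isB : ∀ A : Set ℝ, MeasurableSet A → MeasurableSet (pairSetoid.sat A) := by
  intro A hA
  rw [pairSetoid_sat]
  exact hA.union (measurable_pairMap hA)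
lemma integrand_eq (x : ℝ) :
    (if (pairSetoid.cls x).Finite then
        (Nat.card ↥(pairSetoid.cls x ∩ Set.Ico (0:ℝ) (1/3)) : ℝ) / (Nat.card ↥(pairSetoid.cls x))
      else (Set.Ico (0:ℝ) (1/3)).indicator 1 x)
    = (Set.Ico (0:ℝ) 1).indicator (fun _ => (1/2:ℝ)) x := by
  have hfin : (pairSetoid.cls x).Finite := by
    rw [pairSetoid_cls]; exact (Set.finite_singleton _).insert _
  rw [if_pos hfin, pairSetoid_cls]
  by_cases h : x ∈ Set.Ico (0:ℝ) 1
  · rw [Set.indicator_of_mem h]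
    have hne : x ≠ pairMap x := (pairMap_ne h).symm
    have hcard : Nat.card ↥({x, pairMap x} : Set ℝ) = 2 := by
      rw [Nat.card_coe_set_eq, Set.ncard_pair hne]
    obtain ⟨a, b⟩ := h
    have hint : ({x, pairMap x} : Set ℝ) ∩ Set.Ico (0:ℝ) (1/3)
        = if x ∈ Set.Ico (0:ℝ) (1/3) then {x} else {pairMap x} := by
      by_cases h1 : x ∈ Set.Ico (0:ℝ) (1/3)
      · rw [if_pos h1]
        obtain ⟨c, d⟩ := h1
        have hp : pairMap x ∉ Set.Ico (0:ℝ) (1/3) := by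
          rw [pairMap_lo ⟨c, d⟩]; simp only [Set.mem_Ico, not_and_or, not_le, not_lt]
          right; linarith
        ext y
        simp only [Set.mem_inter_iff, Set.mem_insert_iff, Set.mem_singleton_iff]
        constructor
        · rintro ⟨rfl | rfl, hy⟩
          · rfl
          · exact absurd hy hp
        · rintro rfl; exact ⟨Or.inl rfl, c, d⟩
      · rw [if_neg h1]
        have h2 : x ∈ Set.Ico (1/3:ℝ) 1 := by
          simp only [Set.mem_Ico, not_and_or, not_le, not_lt] at h1
          rcases h1 with h' | h'
          · exact absurd a (not_le.mpr h')
          · exact ⟨h', b⟩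
        obtain ⟨c, d⟩ := h2
        have hp : pairMap x ∈ Set.Ico (0:ℝ) (1/3) := by
          rw [pairMap_hi ⟨c, d⟩]; constructor <;> [linarith; linarith]
        ext y
        simp only [Set.mem_inter_iff, Set.mem_insert_iff, Set.mem_singleton_iff]
        constructor
        · rintro ⟨rfl | rfl, hy⟩
          · exact absurd hy h1
          · rfl
        · rintro rfl; exact ⟨Or.inr rfl, hp⟩
    have hcard1 : Nat.card ↥(({x, pairMap x} : Set ℝ) ∩ Set.Ico (0:ℝ) (1/3)) = 1 := by
      rw [hint]
      split_ifs <;> rw [Nat.card_coe_set_eq, Set.ncard_singleton]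
    rw [hcard, hcard1]
    norm_num
  · have hp : pairMap x = x := pairMap_out h
    have hxA : x ∉ Set.Ico (0:ℝ) (1/3) := by
      simp only [Set.mem_Ico, not_and_or, not_le, not_lt] at h ⊢
      rcases h with h' | h'
      · left; exact h'
      · right; linarith
    rw [Set.indicator_of_notMem h, hp]
    have hpair : ({x, x} : Set ℝ) = {x} := Set.pair_eq_singleton x
    have hempty : ({x} : Set ℝ) ∩ Set.Ico (0:ℝ) (1/3) = ∅ := by
      rw [Set.singleton_inter_eq_empty]; exact hxA
    rw [hpair, hempty]
    simp [Nat.card_coe_set_eq]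


/-- There is a `B`-partition of the unit interval (with Lebesgue measure)
without the re-randomizing property: the partition of `[0,1)` into the pairs
`{x, 2x + 1/3}` for `0 ≤ x < 1/3` (and singletons elsewhere) is a `B`-partition, but
re-randomizing a uniform random point along it yields a point landing in `[0,1/3)` with
probability `1/2` rather than `1/3`. -/
theorem exists_bPartition_not_rerand :
    ∃ s : Setoid ℝ,
      (∀ x y : ℝ, s.r x y ↔ (y = x ∨ y = pairMap x)) ∧
      IsBPartition s ∧
      rerandProb s (MeasureTheory.volume.restrict (Set.Icc (0:ℝ) 1))
          (Set.Ico (0:ℝ) (1/3)) = 1/2 ∧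
      ((MeasureTheory.volume.restrict (Set.Icc (0:ℝ) 1))
          (Set.Ico (0:ℝ) (1/3))).toReal = 1/3 ∧
      ¬ HasRerand s (MeasureTheory.volume.restrict (Set.Icc (0:ℝ) 1)) := by
  have hmeas : (MeasureTheory.volume.restrict (Set.Icc (0:ℝ) 1))
      (Set.Ico (0:ℝ) (1/3)) = ENNReal.ofReal (1/3) := by
    rw [Measure.restrict_apply measurableSet_Ico]
    have h : Set.Ico (0:ℝ) (1/3) ∩ Set.Icc 0 1 = Set.Ico 0 (1/3) :=
      Set.inter_eq_left.mpr (fun y hy => ⟨hy.1, le_of_lt (lt_of_lt_of_le hy.2 (by norm_num))⟩)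
    rw [h, Real.volume_Ico]
    norm_num
  have hprob : rerandProb pairSetoid (MeasureTheory.volume.restrict (Set.Icc (0:ℝ) 1))
      (Set.Ico (0:ℝ) (1/3)) = 1/2 := by
    unfold rerandProb
    have hfun : (fun x => if (pairSetoid.cls x).Finite then
          (Nat.card ↥(pairSetoid.cls x ∩ Set.Ico (0:ℝ) (1/3)) : ℝ)
            / (Nat.card ↥(pairSetoid.cls x))
        else (Set.Ico (0:ℝ) (1/3)).indicator 1 x)
        = (Set.Ico (0:ℝ) 1).indicator (fun _ => (1/2:ℝ)) := funext integrand_eq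
    rw [hfun, integral_indicator measurableSet_Ico, setIntegral_const, measureReal_def,
      Measure.restrict_apply measurableSet_Ico]
    have h : Set.Ico (0:ℝ) 1 ∩ Set.Icc 0 1 = Set.Ico 0 1 :=
      Set.inter_eq_left.mpr Set.Ico_subset_Icc_self
    rw [h, Real.volume_Ico]
    norm_num
  refine ⟨pairSetoid, fun x y => Iff.rfl, pairSetoid_isB, hprob, ?_, ?_⟩
  · rw [hmeas, ENNReal.toReal_ofReal (by norm_num)]
  · intro hR
    have := hR (Set.Ico (0:ℝ) (1/3)) measurableSet_Ico
    rw [hprob, hmeas, ENNReal.toReal_ofReal (by norm_num)] at this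
    norm_num at this
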